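/- Let Γ be a colored tree. For every minimally complete subset Y ⊆ E(Γ), the vector v_Y lies in C(Γ) and spans a one-dimensional face of C(Γ); moreover the assignment Y ↦ ℝ_{≥0}·v_Y is a bijection from the set of minimally complete subsets of E(Γ) onto the set of one-dimensional faces of C(Γ). -/

import Mathlib

noncomputable section
open Classical

/-- A rose tree whose leaves ("colored vertices") carry labels of type `α` and whose
internal vertices ("uncolored vertices") are unlabelled. -/
inductive CTree (α : Type) : Type
  | leaf (a : α) : CTree α
  | node (ts : List (CTree α)) : CTree α

namespace CTree

variable {α : Type}

/-- The subtree of `t` at a position `p` (a list of child indices), if it exists. -/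
def sub : CTree α → List ℕ → Option (CTree α)
  | t, [] => some t
  | leaf _, _ :: _ => none
  | node ts, i :: p =>
      match ts[i]? with
      | some c => sub c p
      | none => none

/-- All lists of natural numbers of length at most `k` with entries `< m`. -/
def allLists (m : ℕ) : ℕ → List (List ℕ)
  | 0 => [[]]
  | k + 1 => [] :: (List.range m).flatMap (fun i => (allLists m k).map (i :: ·))

/-- The finite set of positions of vertices of `t`. -/
def vertS (t : CTree α) : Finset (List ℕ) :=
  (allLists (sizeOf t) (sizeOf t)).toFinset.filter (fun p => (t.sub p).isSome)

/-- The finite set of positions of uncolored (internal) vertices of `t`. -/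
def uncS (t : CTree α) : Finset (List ℕ) :=
  (allLists (sizeOf t) (sizeOf t)).toFinset.filter (fun p => ∃ ts, t.sub p = some (node ts))

/-- The finite set of positions of colored vertices (leaves) of `t`. -/
def colS (t : CTree α) : Finset (List ℕ) :=
  (allLists (sizeOf t) (sizeOf t)).toFinset.filter (fun p => ∃ a, t.sub p = some (leaf a))

/-- Edges of `t` are identified with the positions of non-root vertices (an edge joins
the vertex at `p ≠ []` to its parent at `p.dropLast`). -/
def edgeS (t : CTree α) : Finset (List ℕ) := (vertS t).erase []

/-- `t` is a colored tree: every internal vertex has at least one child (so the leaves,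
i.e. the childless vertices, are exactly the colored vertices) and the root is
uncolored. -/
def IsColoredTree (t : CTree α) : Prop :=
  (∀ p, t.sub p ≠ some (node ([] : List (CTree α)))) ∧ ∃ ts, t = node ts

/-- The weight `w_d ∈ M` of an edge `d`: the sum of the dual basis vectors `e_u^*`
over uncolored vertices `u` that are descendants of the upper endpoint of `d` but not
descendants of the lower endpoint of `d`. -/
def wt (t : CTree α) (d : List ℕ) : List ℕ → ℤ := fun u =>
  if u ∈ uncS t ∧ d.dropLast <+: u ∧ ¬ d <+: u then 1 else 0

/-- `s_v ∈ M` : the sum of `e_u^*` over the uncolored descendants `u` of `v`;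
`s(Γ) = sv t []`. -/
def sv (t : CTree α) (v : List ℕ) : List ℕ → ℤ := fun u =>
  if u ∈ uncS t ∧ v <+: u then 1 else 0

/-- The pairing between `M = Hom(ℤ^g, ℤ)` and `ℤ^g` (both realized as integer-valued
functions on the uncolored vertices of `t`). -/
def pairZ (t : CTree α) (μ x : List ℕ → ℤ) : ℤ := ∑ p ∈ uncS t, μ p * x p

/-- The pairing between `M` and `ℝ^g`. -/
def pairR (t : CTree α) (μ : List ℕ → ℤ) (x : List ℕ → ℝ) : ℝ :=
  ∑ p ∈ uncS t, (μ p : ℝ) * x p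

/-- The multiset of edges of the (downward) path from the vertex `v` to the vertex `c`;
each edge occurs with multiplicity one. -/
def pathEdges (t : CTree α) (v c : List ℕ) : Multiset (List ℕ) :=
  ((edgeS t).filter (fun d => v <+: d ∧ d ≠ v ∧ d <+: c)).val

/-- The relation `A ∼ B` on multisets of edges: `A` and `B` consist exactly of the edges
of two non-self-crossing paths from a common vertex to two colored vertices. -/
def Sim (t : CTree α) (A B : Multiset (List ℕ)) : Prop :=
  ∃ v ∈ vertS t, ∃ c₁ ∈ colS t, ∃ c₂ ∈ colS t, v <+: c₁ ∧ v <+: c₂ ∧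
    A = pathEdges t v c₁ ∧ B = pathEdges t v c₂

/-- `Y` is a minimally complete subset of the set of edges of `t`: every
(non-self-crossing) path from the root to a colored vertex contains exactly one edge
of `Y`. -/
def MinComplete (t : CTree α) (Y : Finset (List ℕ)) : Prop :=
  Y ⊆ edgeS t ∧ ∀ c ∈ colS t, ∃! d, d ∈ Y ∧ d <+: c

/-- The finite set of minimally complete subsets of the edge set of `t`. -/
def MCfin (t : CTree α) : Finset (Finset (List ℕ)) :=
  (edgeS t).powerset.filter (fun Y => MinComplete t Y)

/-- The dual cone `C(Γ) = {x ∈ ℝ^g | ⟨w_d, x⟩ ≥ 0 for all edges d}`. -/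
def dualCone (t : CTree α) : Set (List ℕ → ℝ) :=
  {x | (∀ p, p ∉ uncS t → x p = 0) ∧ ∀ d ∈ edgeS t, 0 ≤ pairR t (wt t d) x}

/-- The ray spanned by a vector `v`. -/
def ray (v : List ℕ → ℝ) : Set (List ℕ → ℝ) := {x | ∃ c : ℝ, 0 ≤ c ∧ x = c • v}

/-- `F` is a one-dimensional face (extreme ray) of the convex cone `C`. -/
def IsOneDimFace (C F : Set (List ℕ → ℝ)) : Prop :=
  F ⊆ C ∧ (∃ v, v ≠ 0 ∧ F = ray v) ∧
    ∀ x ∈ C, ∀ y ∈ C, x + y ∈ F → x ∈ F ∧ y ∈ F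

/-- The convex cone generated by a set `G ⊆ ℤ^g` inside `ℝ^g`: all finite nonnegative
real combinations of elements of `G`. -/
def coneHull (G : Set (List ℕ → ℤ)) : Set (List ℕ → ℝ) :=
  {x | ∃ (F : Finset (List ℕ → ℤ)) (c : (List ℕ → ℤ) → ℝ),
    ↑F ⊆ G ∧ (∀ v ∈ F, 0 ≤ c v) ∧
    x = ∑ v ∈ F, c v • (fun p => ((v p : ℤ) : ℝ))}

/-- `e_{v_0} ∈ ℤ^g`: the basis vector of the root vertex. -/
def e0 : List ℕ → ℤ := fun p => if p = [] then 1 else 0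

/-- The inclusion `ℤ^{g_i} → ℤ^g` corresponding to the `i`-th principal subtree. -/
def shift (i : ℕ) (f : List ℕ → ℤ) : List ℕ → ℤ := fun p =>
  match p with
  | [] => 0
  | j :: q => if j = i then f q else 0

def isNodeB : CTree α → Bool
  | leaf _ => false
  | node _ => true

/-- The recursively defined set `G(Γ) ⊆ ℤ^g`: `G(Γ)` consists of all vectors
`e_{v₀} + ∑_{i ∈ J} (w_i - e_{v₀})` where `J` ranges over subsets of the set of indices
of non-trivial principal subtrees and `w_i ∈ G(Γ_i)` (in particular if `g = 1` this is
just `{e_{v₀}}`). -/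
def Gset : CTree α → Set (List ℕ → ℤ)
  | leaf _ => ∅
  | node ts =>
      {v | ∃ (J : Finset (Fin ts.length)) (w : Fin ts.length → (List ℕ → ℤ)),
        (∀ i ∈ J, (ts.get i).isNodeB = true ∧ w i ∈ Gset (ts.get i)) ∧
        v = e0 + ∑ i ∈ J, (shift i.1 (w i) - e0)}
  termination_by t => sizeOf t
  decreasing_by
    have h1 : ts.get i ∈ ts := List.get_mem ts i
    have h2 := List.sizeOf_lt_of_mem h1
    simp only [CTree.node.sizeOf_spec]
    omega

/-- Transport of a set of edges of `Γ` to the `i`-th principal subtree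
(`Y ∩ E(Γ_i)`, rewritten in the coordinates of `Γ_i`). -/
def sect (i : ℕ) (Y : Finset (List ℕ)) : Finset (List ℕ) :=
  (Y.filter (fun p => p.head? = some i)).image List.tail

/-- The recursively defined vector `v_Y ∈ ℤ^g` attached to a (minimally complete) set
of edges `Y`: `v_Y = e_{v₀} + ∑_{i ∈ I} (v_{Y_i} - e_{v₀})` where
`I = {i | d_i ∉ Y}` and `Y_i = Y ∩ E(Γ_i)` (if `g = 1` this is just `e_{v₀}`). -/
def vY : CTree α → Finset (List ℕ) → (List ℕ → ℤ)
  | leaf _, _ => 0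
  | node ts, Y =>
      e0 + ∑ i ∈ Finset.univ.filter (fun i : Fin ts.length => [i.1] ∉ Y),
        (shift i.1 (vY (ts.get i) (sect i.1 Y)) - e0)
  termination_by t => sizeOf t
  decreasing_by
    have h1 : ts.get i ∈ ts := List.get_mem ts i
    have h2 := List.sizeOf_lt_of_mem h1
    simp only [CTree.node.sizeOf_spec]
    omega

/-- The set of balanced labellings `X(Γ) ⊆ ℂ^{E(Γ)}`. -/
def Xbal (t : CTree α) : Set (List ℕ → ℂ) :=
  {x | ∀ v ∈ uncS t, ∀ c ∈ colS t, ∀ c' ∈ colS t, v <+: c → v <+: c' →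
    ((pathEdges t v c).map x).prod = ((pathEdges t v c').map x).prod}

/-- `Y ⊆ E(Γ)` is complete: for every finite multiset `A` of edges, the monomial
`∏_{d ∈ A} x_d` vanishes identically on `{x ∈ X(Γ) | x_y = 0 ∀ y ∈ Y}` if and only if
`A` contains at least one edge belonging to `Y`. -/
def CompleteSet (t : CTree α) (Y : Finset (List ℕ)) : Prop :=
  ∀ A : Multiset (List ℕ), (∀ d ∈ A, d ∈ edgeS t) →
    ((∀ x ∈ Xbal t, (∀ y ∈ Y, x y = 0) → (A.map x).prod = 0) ↔ ∃ d ∈ A, d ∈ Y)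

/-- A partition of a type `I`: a finite collection of nonempty pairwise disjoint
subsets covering `I`. -/
def IsPart {I : Type} (P : Finset (Finset I)) : Prop :=
  (∀ S ∈ P, S ≠ ∅) ∧ ∀ a : I, ∃! S, S ∈ P ∧ a ∈ S

/-- The tree with a single uncolored vertex whose children are the colored vertices
labelled by the elements of `S`. -/
def blockTree {I : Type} (S : Finset I) : CTree I := node (S.toList.map leaf)

/-- The colored tree `Γ_P` of a partition `P`: the root has one child for each block
`S ∈ P`, an uncolored vertex whose children are colored vertices labelled by the
elements of `S`. -/
def gammaP {I : Type} (P : Finset (Finset I)) : CTree I := node (P.toList.map blockTree)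

/-- A tree homomorphism `t → t'`, described by a map `f` on vertex positions: it sends
root to root, vertices to vertices, the two endpoints of any edge to the two endpoints
of an edge, and restricts to a label-preserving bijection between the colored
vertices. -/
def TreeHom {I : Type} (t t' : CTree I) (f : List ℕ → List ℕ) : Prop :=
  f [] = [] ∧
  (∀ p ∈ vertS t, f p ∈ vertS t') ∧
  (∀ p ∈ vertS t, p ≠ [] →
    (f p ≠ [] ∧ (f p).dropLast = f p.dropLast) ∨
    (f p.dropLast ≠ [] ∧ (f p.dropLast).dropLast = f p)) ∧
  (∀ p a, t.sub p = some (leaf a) → t'.sub (f p) = some (leaf a)) ∧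
  Set.BijOn f {p | ∃ a, t.sub p = some (leaf a)} {q | ∃ a, t'.sub q = some (leaf a)}

/-- A partition `P` of the label set is compatible with the colored tree `t` if there
exists a tree homomorphism `t → Γ_P`. -/
def Compatible {I : Type} (t : CTree I) (P : Finset (Finset I)) : Prop :=
  ∃ f, TreeHom t (gammaP P) f

/-- `C_y ⊆ I` : the labels of the colored vertices whose path from the root contains
the edge `y`. -/
def Cy {I : Type} [Fintype I] [DecidableEq I] (t : CTree I) (y : List ℕ) : Finset I :=
  Finset.univ.filter (fun a => ∃ p, t.sub p = some (leaf a) ∧ y <+: p)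

end CTree
namespace CTree
variable {α : Type}

theorem mem_allLists {m k : ℕ} {p : List ℕ} :
    p ∈ allLists m k ↔ p.length ≤ k ∧ ∀ x ∈ p, x < m := by
  induction k generalizing p with
  | zero =>
    simp only [allLists, List.mem_singleton]
    constructor
    · rintro rfl; simp
    · rintro ⟨h1, _⟩
      cases p with
      | nil => rfl
      | cons a q => simp at h1
  | succ k ih =>
    simp only [allLists, List.mem_cons, List.mem_flatMap, List.mem_map, List.mem_range]
    constructor
    · rintro (rfl | ⟨i, hi, q, hq, rfl⟩)
      · simp
      · obtain ⟨h1, h2⟩ := ih.1 hq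
        refine ⟨by simpa using Nat.succ_le_succ h1, ?_⟩
        intro x hx
        rcases List.mem_cons.1 hx with rfl | hx
        · exact hi
        · exact h2 x hx
    · rintro ⟨h1, h2⟩
      cases p with
      | nil => exact Or.inl rfl
      | cons i q =>
        refine Or.inr ⟨i, h2 i (by simp), q, ih.2 ⟨by simpa using h1, fun x hx => h2 x (by simp [hx])⟩, rfl⟩

theorem sub_append (t : CTree α) (p q : List ℕ) :
    sub t (p ++ q) = (sub t p).bind (fun s => sub s q) := by
  induction p generalizing t with
  | nil => simp [sub]
  | cons i p ih =>
    cases t with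
    | leaf a => simp [sub]
    | node ts =>
      simp only [List.cons_append, sub]
      cases h : ts[i]? with
      | none => simp
      | some c => simp [ih]

theorem one_le_sizeOf (t : CTree α) : 1 ≤ sizeOf t := by
  cases t <;> simp <;> omega

theorem length_lt_sizeOf (l : List (CTree α)) : l.length < sizeOf l := by
  induction l with
  | nil => simp
  | cons a l ih =>
    have := one_le_sizeOf a
    simp only [List.length_cons, List.cons.sizeOf_spec]
    omega

theorem sub_bound : ∀ {p : List ℕ} {t s : CTree α}, sub t p = some s →
    p.length + sizeOf s ≤ sizeOf t ∧ ∀ x ∈ p, x < sizeOf t := by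
  intro p
  induction p with
  | nil =>
    intro t s h
    simp only [sub, Option.some_inj] at h
    subst h
    simp
  | cons i q ih =>
    intro t s h
    cases t with
    | leaf a => simp [sub] at h
    | node ts =>
      simp only [sub] at h
      cases hc : ts[i]? with
      | none => rw [hc] at h; simp at h
      | some c =>
        rw [hc] at h
        obtain ⟨h1, h2⟩ := ih h
        have hcm : c ∈ ts := List.mem_of_getElem? hc
        have hcs : sizeOf c < sizeOf ts := List.sizeOf_lt_of_mem hcm
        have hil : i < ts.length := by
          by_contra hcon
          push_neg at hcon
          rw [List.getElem?_eq_none hcon] at hc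
          simp at hc
        have hlen := length_lt_sizeOf ts
        constructor
        · simp only [List.length_cons, node.sizeOf_spec]; omega
        · intro x hx
          rcases List.mem_cons.1 hx with rfl | hx
          · simp only [node.sizeOf_spec]; omega
          · have := h2 x hx
            simp only [node.sizeOf_spec]; omega

theorem mem_vertS {t : CTree α} {p : List ℕ} : p ∈ vertS t ↔ (sub t p).isSome := by
  simp only [vertS, Finset.mem_filter, List.mem_toFinset, mem_allLists]
  constructor
  · exact fun h => h.2
  · intro h
    cases hs : sub t p with
    | none => rw [hs] at h; simp at h
    | some s =>
      obtain ⟨h1, h2⟩ := sub_bound hs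
      have := one_le_sizeOf s
      exact ⟨⟨by omega, h2⟩, by simp [hs]⟩

theorem mem_uncS {t : CTree α} {p : List ℕ} :
    p ∈ uncS t ↔ ∃ ts, sub t p = some (node ts) := by
  simp only [uncS, Finset.mem_filter, List.mem_toFinset, mem_allLists]
  constructor
  · exact fun h => h.2
  · rintro ⟨ts, hs⟩
    obtain ⟨h1, h2⟩ := sub_bound hs
    have := one_le_sizeOf (node ts)
    exact ⟨⟨by omega, h2⟩, ts, hs⟩

theorem mem_colS {t : CTree α} {p : List ℕ} :
    p ∈ colS t ↔ ∃ a, sub t p = some (leaf a) := by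
  simp only [colS, Finset.mem_filter, List.mem_toFinset, mem_allLists]
  constructor
  · exact fun h => h.2
  · rintro ⟨a, hs⟩
    obtain ⟨h1, h2⟩ := sub_bound hs
    have := one_le_sizeOf (leaf a : CTree α)
    exact ⟨⟨by omega, h2⟩, a, hs⟩

theorem mem_edgeS {t : CTree α} {p : List ℕ} :
    p ∈ edgeS t ↔ p ≠ [] ∧ (sub t p).isSome := by
  simp only [edgeS, Finset.mem_erase, mem_vertS]

theorem uncS_subset_vertS {t : CTree α} {p : List ℕ} (h : p ∈ uncS t) : p ∈ vertS t := by
  obtain ⟨ts, hs⟩ := mem_uncS.1 h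
  rw [mem_vertS, hs]; rfl

theorem colS_subset_vertS {t : CTree α} {p : List ℕ} (h : p ∈ colS t) : p ∈ vertS t := by
  obtain ⟨a, hs⟩ := mem_colS.1 h
  rw [mem_vertS, hs]; rfl

theorem not_unc_of_col {t : CTree α} {p : List ℕ} (h : p ∈ colS t) : p ∉ uncS t := by
  obtain ⟨a, hs⟩ := mem_colS.1 h
  intro h'
  obtain ⟨ts, hs'⟩ := mem_uncS.1 h'
  rw [hs] at hs'
  simp at hs'

theorem unc_or_col_of_vert {t : CTree α} {p : List ℕ} (h : p ∈ vertS t) :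
    p ∈ uncS t ∨ p ∈ colS t := by
  cases hs : sub t p with
  | none => rw [mem_vertS, hs] at h; simp at h
  | some s =>
    cases s with
    | leaf a => exact Or.inr (mem_colS.2 ⟨a, hs⟩)
    | node ts => exact Or.inl (mem_uncS.2 ⟨ts, hs⟩)

theorem vert_of_prefix {t : CTree α} {p q : List ℕ} (hpq : q <+: p) (h : p ∈ vertS t) :
    q ∈ vertS t := by
  obtain ⟨r, rfl⟩ := hpq
  rw [mem_vertS] at h ⊢
  rw [sub_append] at h
  cases hs : sub t q with
  | none => rw [hs] at h; simp at h
  | some s => rfl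

theorem unc_of_proper_prefix {t : CTree α} {p q : List ℕ} (hpq : q <+: p) (hne : q ≠ p)
    (h : p ∈ vertS t) : q ∈ uncS t := by
  obtain ⟨r, rfl⟩ := hpq
  have hr : r ≠ [] := by rintro rfl; simp at hne
  have hq := vert_of_prefix (List.prefix_append q r) h
  rcases unc_or_col_of_vert hq with h' | h'
  · exact h'
  · exfalso
    obtain ⟨a, hs⟩ := mem_colS.1 h'
    rw [mem_vertS, sub_append, hs] at h
    cases r with
    | nil => exact hr rfl
    | cons i r' => simp [sub] at h

theorem unc_of_parent {t : CTree α} {p : List ℕ} (h : p ∈ vertS t) (hne : p ≠ []) :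
    p.dropLast ∈ uncS t := by
  refine unc_of_proper_prefix (List.dropLast_prefix p) ?_ h
  intro he
  have := congrArg List.length he
  rw [List.length_dropLast] at this
  have : p.length ≠ 0 := fun h0 => hne (List.length_eq_zero_iff.1 h0)
  omega

theorem exists_leaf_sub : ∀ (n : ℕ) (s : CTree α), sizeOf s ≤ n →
    (∀ q, sub s q ≠ some (node ([] : List (CTree α)))) → ∃ r a, sub s r = some (leaf a) := by
  intro n
  induction n with
  | zero => intro s hs _; have := one_le_sizeOf s; omega
  | succ n ih =>
    intro s hs hne
    cases s with
    | leaf a => exact ⟨[], a, rfl⟩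
    | node ts =>
      have hts : ts ≠ [] := by
        rintro rfl
        exact hne [] rfl
      have h0 : 0 < ts.length := List.length_pos_iff.2 hts
      obtain ⟨c, hc⟩ : ∃ c, ts[0]? = some c := by
        cases hc0 : ts[0]? with
        | none =>
          rw [List.getElem?_eq_none_iff] at hc0
          omega
        | some c => exact ⟨c, rfl⟩
      have hcs : sizeOf c < sizeOf (node ts) := by
        have := List.sizeOf_lt_of_mem (List.mem_of_getElem? hc)
        simp only [node.sizeOf_spec]; omega
      obtain ⟨r, a, hr⟩ := ih c (by omega) (by
        intro q hq
        exact hne (0 :: q) (by simp only [sub, hc]; exact hq))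
      exact ⟨0 :: r, a, by simp only [sub, hc]; exact hr⟩

theorem exists_colored_desc {t : CTree α} (ht : IsColoredTree t) {p : List ℕ}
    (h : p ∈ vertS t) : ∃ c ∈ colS t, p <+: c := by
  obtain ⟨s, hs⟩ := Option.isSome_iff_exists.1 (mem_vertS.1 h)
  obtain ⟨r, a, hr⟩ := exists_leaf_sub (sizeOf s) s le_rfl (by
    intro q hq
    refine ht.1 (p ++ q) ?_
    rw [sub_append, hs]
    exact hq)
  refine ⟨p ++ r, mem_colS.2 ⟨a, ?_⟩, List.prefix_append p r⟩
  rw [sub_append, hs]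
  exact hr

theorem root_unc {t : CTree α} (ht : IsColoredTree t) : ([] : List ℕ) ∈ uncS t := by
  obtain ⟨ts, rfl⟩ := ht.2
  exact mem_uncS.2 ⟨ts, rfl⟩

end CTree
namespace CTree
variable {α : Type}

theorem pairR_sv (t : CTree α) (v : List ℕ) (x : List ℕ → ℝ) :
    pairR t (sv t v) x = ∑ u ∈ (uncS t).filter (fun u => v <+: u), x u := by
  rw [Finset.sum_filter, pairR]
  refine Finset.sum_congr rfl ?_
  intro u hu
  by_cases h : v <+: u
  · simp [sv, hu, h]
  · simp [sv, h]

theorem pairR_wt (t : CTree α) {d : List ℕ} (x : List ℕ → ℝ) :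
    pairR t (wt t d) x = pairR t (sv t d.dropLast) x - pairR t (sv t d) x := by
  simp only [pairR, ← Finset.sum_sub_distrib, ← sub_mul]
  refine Finset.sum_congr rfl ?_
  intro u hu
  congr 1
  rw [← Int.cast_sub]
  congr 1
  by_cases h1 : d <+: u
  · have h2 : d.dropLast <+: u := (List.dropLast_prefix d).trans h1
    simp [wt, sv, h1, h2, hu]
  · by_cases h2 : d.dropLast <+: u
    · simp [wt, sv, h1, h2, hu]
    · simp [wt, sv, h1, h2]

theorem sv_colS_zero (t : CTree α) {c : List ℕ} (hc : c ∈ colS t) (x : List ℕ → ℝ) :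
    pairR t (sv t c) x = 0 := by
  rw [pairR]
  refine Finset.sum_eq_zero ?_
  intro u hu
  suffices h : ¬ c <+: u by simp [sv, h]
  intro hcu
  obtain ⟨r, rfl⟩ := hcu
  obtain ⟨a, ha⟩ := mem_colS.1 hc
  obtain ⟨ts, hts⟩ := mem_uncS.1 hu
  rw [sub_append, ha] at hts
  cases r with
  | nil => simp [sub] at hts
  | cons i r' => simp [sub] at hts

theorem dropLast_take_succ {v : List ℕ} {m : ℕ} (h : m < v.length) :
    (v.take (m+1)).dropLast = v.take m := by
  rw [List.dropLast_eq_take, List.length_take, List.take_take]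
  congr 1
  omega

theorem take_mem_edgeS {t : CTree α} {v : List ℕ} (hv : v ∈ vertS t) {m : ℕ}
    (hm : m < v.length) : v.take (m+1) ∈ edgeS t := by
  rw [mem_edgeS]
  constructor
  · have : (v.take (m+1)).length = m+1 := by
      rw [List.length_take]; omega
    intro h
    rw [h] at this
    simp at this
  · exact mem_vertS.1 (vert_of_prefix (List.take_prefix _ v) hv)

theorem Yv_step {t : CTree α} {x : List ℕ → ℝ} (hx : x ∈ dualCone t) {v : List ℕ}
    (hv : v ∈ vertS t) {m : ℕ} (hm : m < v.length) :
    pairR t (sv t (v.take (m+1))) x ≤ pairR t (sv t (v.take m)) x := by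
  have he := take_mem_edgeS hv hm
  have h0 := hx.2 _ he
  rw [pairR_wt, dropLast_take_succ hm] at h0
  linarith

theorem Yv_mono_take {t : CTree α} {x : List ℕ → ℝ} (hx : x ∈ dualCone t) {v : List ℕ}
    (hv : v ∈ vertS t) (m : ℕ) :
    pairR t (sv t v) x ≤ pairR t (sv t (v.take m)) x := by
  have key : ∀ k m, pairR t (sv t (v.take (m + k))) x ≤ pairR t (sv t (v.take m)) x := by
    intro k
    induction k with
    | zero => intro m; rfl
    | succ k ih =>
      intro m
      by_cases hm : m < v.length
      · have h1 : m + (k + 1) = (m + 1) + k := by omega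
        rw [h1]
        exact le_trans (ih (m+1)) (Yv_step hx hv hm)
      · push_neg at hm
        have h1 : v.take (m + (k+1)) = v.take m := by
          rw [List.take_of_length_le hm, List.take_of_length_le (by omega)]
        rw [h1]
  have h2 : v.take (m + v.length) = v := List.take_of_length_le (by omega)
  calc pairR t (sv t v) x = pairR t (sv t (v.take (m + v.length))) x := by rw [h2]
    _ ≤ pairR t (sv t (v.take m)) x := key v.length m

theorem Yv_mono_prefix {t : CTree α} {x : List ℕ → ℝ} (hx : x ∈ dualCone t) {v q : List ℕ}
    (hv : v ∈ vertS t) (hq : q <+: v) :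
    pairR t (sv t v) x ≤ pairR t (sv t q) x := by
  have : q = v.take q.length := List.prefix_iff_eq_take.1 hq
  rw [this]
  exact Yv_mono_take hx hv q.length

theorem Yv_nonneg {t : CTree α} (ht : IsColoredTree t) {x : List ℕ → ℝ}
    (hx : x ∈ dualCone t) {v : List ℕ} (hv : v ∈ vertS t) :
    0 ≤ pairR t (sv t v) x := by
  obtain ⟨c, hc, hvc⟩ := exists_colored_desc ht hv
  have h0 := sv_colS_zero t hc x
  have := Yv_mono_prefix hx (colS_subset_vertS hc) hvc
  linarith

theorem eq_zero_of_Yv_zero {t : CTree α} {x : List ℕ → ℝ}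
    (hsupp : ∀ p, p ∉ uncS t → x p = 0)
    (hY : ∀ v ∈ uncS t, pairR t (sv t v) x = 0) : ∀ v, x v = 0 := by
  have key : ∀ n v, sizeOf t ≤ v.length + n → x v = 0 := by
    intro n
    induction n with
    | zero =>
      intro v hn
      by_cases hv : v ∈ uncS t
      · exfalso
        obtain ⟨ts, hts⟩ := mem_uncS.1 hv
        obtain ⟨h1, _⟩ := sub_bound hts
        have := one_le_sizeOf (node ts : CTree α)
        omega
      · exact hsupp v hv
    | succ n ih =>
      intro v hn
      by_cases hv : v ∈ uncS t
      · have h0 := hY v hv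
        rw [pairR_sv] at h0
        set S := (uncS t).filter (fun u => v <+: u) with hS
        have hvS : v ∈ S := Finset.mem_filter.2 ⟨hv, List.prefix_refl v⟩
        rw [← Finset.add_sum_erase S x hvS] at h0
        have hrest : ∑ u ∈ S.erase v, x u = 0 := by
          refine Finset.sum_eq_zero ?_
          intro u hu
          obtain ⟨hune, huS⟩ := Finset.mem_erase.1 hu
          obtain ⟨_, hpre⟩ := Finset.mem_filter.1 huS
          have hlen : v.length < u.length := by
            rcases Nat.lt_or_ge v.length u.length with h | h
            · exact h
            · exact absurd (List.IsPrefix.eq_of_length_le hpre h).symm hune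
          exact ih u (by omega)
        rw [hrest] at h0
        linarith
      · exact hsupp v hv
  intro v
  exact key (sizeOf t) v (by omega)

theorem pairR_add (t : CTree α) (μ : List ℕ → ℤ) (x y : List ℕ → ℝ) :
    pairR t μ (x + y) = pairR t μ x + pairR t μ y := by
  simp [pairR, mul_add, Finset.sum_add_distrib]

theorem pairR_sub (t : CTree α) (μ : List ℕ → ℤ) (x y : List ℕ → ℝ) :
    pairR t μ (x - y) = pairR t μ x - pairR t μ y := by
  simp [pairR, mul_sub, Finset.sum_sub_distrib]

theorem pairR_smul (t : CTree α) (μ : List ℕ → ℤ) (c : ℝ) (x : List ℕ → ℝ) :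
    pairR t μ (c • x) = c * pairR t μ x := by
  simp only [pairR, Pi.smul_apply, smul_eq_mul, Finset.mul_sum]
  refine Finset.sum_congr rfl fun u _ => by ring

theorem dualCone_add {t : CTree α} {x y : List ℕ → ℝ} (hx : x ∈ dualCone t)
    (hy : y ∈ dualCone t) : x + y ∈ dualCone t := by
  refine ⟨fun p hp => ?_, fun d hd => ?_⟩
  · simp [Pi.add_apply, hx.1 p hp, hy.1 p hp]
  · rw [pairR_add]
    exact add_nonneg (hx.2 d hd) (hy.2 d hd)

theorem dualCone_smul {t : CTree α} {c : ℝ} (hc : 0 ≤ c) {x : List ℕ → ℝ}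
    (hx : x ∈ dualCone t) : c • x ∈ dualCone t := by
  refine ⟨fun p hp => ?_, fun d hd => ?_⟩
  · simp [Pi.smul_apply, hx.1 p hp]
  · rw [pairR_smul]
    exact mul_nonneg hc (hx.2 d hd)

end CTree
namespace CTree
variable {α : Type}

/-- Indicator of the set `D` of uncolored vertices with no `Y`-prefix. -/
def chiY (t : CTree α) (Y : Finset (List ℕ)) : List ℕ → ℤ :=
  fun v => if v ∈ uncS t ∧ ∀ d ∈ Y, ¬ d <+: v then 1 else 0

theorem sub_node_cons (ts : List (CTree α)) (j : ℕ) (q : List ℕ) :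
    sub (node ts) (j :: q) = (ts[j]?).bind (fun c => sub c q) := by
  cases h : ts[j]? with
  | none => simp [sub, h]
  | some c => simp [sub, h]

theorem prefix_singleton {d : List ℕ} {j : ℕ} (h : d <+: [j]) : d = [] ∨ d = [j] := by
  obtain ⟨r, hr⟩ := h
  cases d with
  | nil => exact Or.inl rfl
  | cons x d' =>
    rw [List.cons_append] at hr
    obtain ⟨h1, h2⟩ := List.cons.injEq .. ▸ hr
    have := List.append_eq_nil_iff.1 h2
    exact Or.inr (by rw [h1, this.1])

theorem nil_not_mem_Y {t : CTree α} {Y : Finset (List ℕ)} (hY : MinComplete t Y) :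
    ([] : List ℕ) ∉ Y := fun h => ((mem_edgeS.1 (hY.1 h)).1) rfl

theorem uncS_cons_iff {ts : List (CTree α)} {j : ℕ} {c : CTree α} (hc : ts[j]? = some c)
    {q : List ℕ} : (j :: q) ∈ uncS (node ts) ↔ q ∈ uncS c := by
  rw [mem_uncS, mem_uncS, sub_node_cons, hc]
  simp

theorem colS_cons_iff {ts : List (CTree α)} {j : ℕ} {c : CTree α} (hc : ts[j]? = some c)
    {q : List ℕ} : (j :: q) ∈ colS (node ts) ↔ q ∈ colS c := by
  rw [mem_colS, mem_colS, sub_node_cons, hc]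
  simp

theorem leaf_child_mem {ts : List (CTree α)} {Y : Finset (List ℕ)}
    (hY : MinComplete (node ts) Y) {j : ℕ} {a : α} (hc : ts[j]? = some (leaf a)) :
    [j] ∈ Y := by
  have hcol : [j] ∈ colS (node ts) := by
    rw [mem_colS]
    exact ⟨a, by rw [sub_node_cons, hc]; rfl⟩
  obtain ⟨d, ⟨hdY, hdp⟩, _⟩ := hY.2 [j] hcol
  rcases prefix_singleton hdp with rfl | rfl
  · exact absurd hdY (nil_not_mem_Y hY)
  · exact hdY

theorem mem_sect {j : ℕ} {Y : Finset (List ℕ)} {q : List ℕ} :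
    q ∈ sect j Y ↔ (j :: q) ∈ Y := by
  simp only [sect, Finset.mem_image, Finset.mem_filter]
  constructor
  · rintro ⟨p, ⟨hp, hh⟩, rfl⟩
    cases p with
    | nil => simp at hh
    | cons x p' =>
      simp only [List.head?_cons, Option.some_inj] at hh
      subst hh
      exact hp
  · intro h
    exact ⟨j :: q, ⟨h, rfl⟩, rfl⟩

theorem isColoredTree_child {ts : List (CTree α)}
    (ht : ∀ q, sub (node ts) q ≠ some (node ([] : List (CTree α))))
    {j : ℕ} {c : CTree α} (hc : ts[j]? = some c) :
    ∀ q, sub c q ≠ some (node ([] : List (CTree α))) := by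
  intro q hq
  refine ht (j :: q) ?_
  rw [sub_node_cons, hc]
  exact hq

theorem minComplete_child {ts : List (CTree α)} {Y : Finset (List ℕ)}
    (hY : MinComplete (node ts) Y) {j : ℕ} {c : CTree α} (hc : ts[j]? = some c)
    (hjY : [j] ∉ Y) : MinComplete c (sect j Y) := by
  constructor
  · intro d' hd'
    have hdY : (j :: d') ∈ Y := mem_sect.1 hd'
    have hde := mem_edgeS.1 (hY.1 hdY)
    rw [mem_edgeS]
    constructor
    · rintro rfl
      exact hjY hdY
    · have := hde.2
      rw [sub_node_cons, hc] at this
      exact this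
  · intro cc hcc
    have hcol : (j :: cc) ∈ colS (node ts) := (colS_cons_iff hc).2 hcc
    obtain ⟨d, ⟨hdY, hdp⟩, hun⟩ := hY.2 (j :: cc) hcol
    cases d with
    | nil => exact absurd hdY (nil_not_mem_Y hY)
    | cons x d' =>
      rw [List.cons_prefix_cons] at hdp
      obtain ⟨rfl, hd'cc⟩ := hdp
      refine ⟨d', ⟨mem_sect.2 hdY, hd'cc⟩, ?_⟩
      intro e ⟨heY, hecc⟩
      have h2 : (x :: e) = (x :: d') :=
        hun (x :: e) ⟨mem_sect.1 heY, List.cons_prefix_cons.2 ⟨rfl, hecc⟩⟩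
      exact (List.cons.injEq .. ▸ h2).2

theorem chiY_cons {ts : List (CTree α)} {Y : Finset (List ℕ)}
    (hY : MinComplete (node ts) Y) {j : ℕ} {c : CTree α} (hc : ts[j]? = some c)
    (hjY : [j] ∉ Y) (r : List ℕ) :
    chiY (node ts) Y (j :: r) = chiY c (sect j Y) r := by
  unfold chiY
  refine if_congr ?_ rfl rfl
  rw [uncS_cons_iff hc]
  refine and_congr_right fun _ => ?_
  constructor
  · intro h d' hd' hpre
    exact h (j :: d') (mem_sect.1 hd') (List.cons_prefix_cons.2 ⟨rfl, hpre⟩)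
  · intro h d hd hpre
    cases d with
    | nil => exact nil_not_mem_Y hY hd
    | cons x d' =>
      rw [List.cons_prefix_cons] at hpre
      obtain ⟨rfl, hpre⟩ := hpre
      exact h d' (mem_sect.2 hd) hpre

theorem chiY_cons_zero_of_mem {t : CTree α} {Y : Finset (List ℕ)} {j : ℕ}
    (hjY : [j] ∈ Y) (r : List ℕ) : chiY t Y (j :: r) = 0 := by
  unfold chiY
  rw [if_neg]
  rintro ⟨_, h⟩
  exact h [j] hjY ⟨r, rfl⟩

theorem chiY_cons_zero_of_none {ts : List (CTree α)} {Y : Finset (List ℕ)} {j : ℕ}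
    (hj : ts[j]? = none) (r : List ℕ) : chiY (node ts) Y (j :: r) = 0 := by
  unfold chiY
  rw [if_neg]
  rintro ⟨h, _⟩
  obtain ⟨ts', hts'⟩ := mem_uncS.1 h
  rw [sub_node_cons, hj] at hts'
  simp at hts'

theorem entries_lt_of_uncS {t : CTree α} {v : List ℕ} (h : v ∈ uncS t) :
    ∀ x ∈ v, x < sizeOf t := by
  obtain ⟨ts, hts⟩ := mem_uncS.1 h
  exact (sub_bound hts).2

theorem vY_eq : ∀ (n : ℕ) (t : CTree α), sizeOf t ≤ n → IsColoredTree t →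
    ∀ Y : Finset (List ℕ), MinComplete t Y → ∀ N, sizeOf t ≤ N → ∀ v,
    vY t Y v = chiY t Y v - ∑ i ∈ Finset.range N, chiY t Y (v ++ [i]) := by
  intro n
  induction n with
  | zero => intro t h; have := one_le_sizeOf t; omega
  | succ n ih =>
    intro t hsz ht Y hY N hN v
    obtain ⟨ts, rfl⟩ := ht.2
    rw [vY]
    set I : Finset (Fin ts.length) :=
      Finset.univ.filter (fun i : Fin ts.length => [i.1] ∉ Y) with hI
    have hroot : ([] : List ℕ) ∈ uncS (node ts) := mem_uncS.2 ⟨ts, rfl⟩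
    have hts_lt : ts.length < sizeOf (node ts) := by
      have := length_lt_sizeOf ts
      simp only [node.sizeOf_spec]
      omega
    cases v with
    | nil =>
      have hLHS : (e0 + ∑ i ∈ I, (shift i.1 (vY (ts.get i) (sect i.1 Y)) - e0))
          ([] : List ℕ) = 1 - (I.card : ℤ) := by
        rw [Pi.add_apply, Finset.sum_apply]
        have : ∀ i ∈ I, (shift i.1 (vY (ts.get i) (sect i.1 Y)) - e0) ([] : List ℕ)
            = -1 := by
          intro i _
          simp [shift, e0]
        rw [Finset.sum_congr rfl this, Finset.sum_const]
        have he0 : e0 ([] : List ℕ) = 1 := by simp [e0]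
        rw [he0]
        push_cast
        ring
      rw [hLHS]
      have hchi0 : chiY (node ts) Y ([] : List ℕ) = 1 := by
        unfold chiY
        rw [if_pos]
        refine ⟨hroot, ?_⟩
        intro d hd hp
        rw [List.prefix_nil] at hp
        exact nil_not_mem_Y hY (hp ▸ hd)
      rw [hchi0]
      have hsum : ∑ i ∈ Finset.range N, chiY (node ts) Y ([] ++ [i]) = (I.card : ℤ) := by
        have : ∀ i ∈ Finset.range N, chiY (node ts) Y ([] ++ [i])
            = if ([i] ∈ uncS (node ts) ∧ [i] ∉ Y) then 1 else 0 := by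
          intro i _
          unfold chiY
          refine if_congr (and_congr_right fun _ => ?_) rfl rfl
          constructor
          · intro h hiY
            exact h [i] hiY (List.prefix_refl _)
          · intro h d hd hp
            rcases prefix_singleton hp with rfl | rfl
            · exact nil_not_mem_Y hY hd
            · exact h hd
        have hcard : I.card
            = ((Finset.range N).filter (fun i => [i] ∈ uncS (node ts) ∧ [i] ∉ Y)).card := by
          refine Finset.card_bij (fun (i : Fin ts.length) _ => i.1) ?_ ?_ ?_
          · intro i hi
            rw [hI, Finset.mem_filter] at hi
            rw [Finset.mem_filter, Finset.mem_range]
            refine ⟨by have := i.2; omega, ?_, hi.2⟩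
            have hc : ts[i.1]? = some (ts.get i) := by
              rw [List.getElem?_eq_getElem i.2]
              rfl
            cases hcc : ts.get i with
            | leaf a => exact absurd (leaf_child_mem hY (hcc ▸ hc)) hi.2
            | node ts' =>
              refine (uncS_cons_iff hc).2 (mem_uncS.2 ⟨ts', ?_⟩)
              rw [hcc]
              rfl
          · intro a _ b _ hab
            exact Fin.ext hab
          · intro b hb
            rw [Finset.mem_filter] at hb
            obtain ⟨_, hbu, hbY⟩ := hb
            have hlt : b < ts.length := by
              obtain ⟨ts', hts'⟩ := mem_uncS.1 hbu
              rw [sub_node_cons] at hts'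
              by_contra hcon
              push_neg at hcon
              rw [List.getElem?_eq_none hcon] at hts'
              simp at hts'
            exact ⟨⟨b, hlt⟩, Finset.mem_filter.2 ⟨Finset.mem_univ _, hbY⟩, rfl⟩
        rw [Finset.sum_congr rfl this, Finset.sum_boole, hcard]
      rw [hsum]
      try omega
    | cons j q =>
      rw [Pi.add_apply, Finset.sum_apply]
      have he0 : e0 (j :: q) = 0 := by simp [e0]
      by_cases hcase : j < ts.length ∧ [j] ∉ Y
      · obtain ⟨hj, hjY⟩ := hcase
        set jf : Fin ts.length := ⟨j, hj⟩ with hjf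
        have hjfI : jf ∈ I := by
          rw [hI, Finset.mem_filter]
          exact ⟨Finset.mem_univ _, hjY⟩
        have hc : ts[j]? = some (ts.get jf) := by
          rw [List.getElem?_eq_getElem hj]
          rfl
        set c := ts.get jf with hcdef
        have hsum : ∑ i ∈ I, (shift i.1 (vY (ts.get i) (sect i.1 Y)) - e0) (j :: q)
            = vY c (sect j Y) q := by
          rw [Finset.sum_eq_single_of_mem jf hjfI]
          · simp [shift, e0, hcdef, hjf]
          · intro i _ hne
            have : j ≠ i.1 := by
              intro h
              exact hne (Fin.ext h.symm)
            simp [shift, e0, this]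
        rw [he0, hsum, zero_add]
        -- c is a node
        have hcnode : ∃ ts', c = node ts' := by
          cases hcc : c with
          | leaf a => exact absurd (leaf_child_mem hY (hcc ▸ hc)) hjY
          | node ts' => exact ⟨ts', rfl⟩
        have hszc : sizeOf c < sizeOf (node ts) := by
          have := List.sizeOf_lt_of_mem (List.mem_of_getElem? hc)
          simp only [node.sizeOf_spec]
          omega
        have hihc := ih c (by omega) ⟨isColoredTree_child ht.1 hc, hcnode⟩
          (sect j Y) (minComplete_child hY hc hjY) N (by omega) q
        rw [hihc]
        rw [chiY_cons hY hc hjY q]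
        congr 1
        refine Finset.sum_congr rfl ?_
        intro i _
        rw [List.cons_append, chiY_cons hY hc hjY (q ++ [i])]
      · have hzero : ∀ r, chiY (node ts) Y (j :: r) = 0 := by
          intro r
          by_cases hjY : [j] ∈ Y
          · exact chiY_cons_zero_of_mem hjY r
          · have hj : ¬ j < ts.length := fun h => hcase ⟨h, hjY⟩
            exact chiY_cons_zero_of_none (List.getElem?_eq_none (by omega)) r
        have hLHS : ∑ i ∈ I, (shift i.1 (vY (ts.get i) (sect i.1 Y)) - e0) (j :: q)
            = 0 := by
          refine Finset.sum_eq_zero ?_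
          intro i hi
          have hne : j ≠ i.1 := by
            intro h
            rw [hI, Finset.mem_filter] at hi
            subst h
            exact hcase ⟨i.2, hi.2⟩
          simp [shift, e0, hne]
        rw [he0, hLHS, hzero q]
        have : ∀ i ∈ Finset.range N, chiY (node ts) Y ((j :: q) ++ [i]) = 0 := by
          intro i _
          rw [List.cons_append]
          exact hzero (q ++ [i])
        rw [Finset.sum_congr rfl this]
        simp

end CTree
namespace CTree
variable {α : Type}

/-- Real-valued version of `vY`. -/
def vYr (t : CTree α) (Y : Finset (List ℕ)) : List ℕ → ℝ := fun p => ((vY t Y p : ℤ) : ℝ)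

theorem not_unc_append {t : CTree α} {p : List ℕ} (h : p ∉ uncS t) (i : ℕ) :
    p ++ [i] ∉ uncS t := by
  intro hu
  have hv : p ++ [i] ∈ vertS t := uncS_subset_vertS hu
  have hp : p ∈ vertS t := vert_of_prefix (List.prefix_append _ _) hv
  rcases unc_or_col_of_vert hp with h' | h'
  · exact h h'
  · obtain ⟨a, ha⟩ := mem_colS.1 h'
    obtain ⟨ts, hts⟩ := mem_uncS.1 hu
    rw [sub_append, ha] at hts
    simp [sub] at hts

theorem vY_supp {t : CTree α} (ht : IsColoredTree t) {Y : Finset (List ℕ)}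
    (hY : MinComplete t Y) {p : List ℕ} (hp : p ∉ uncS t) : vY t Y p = 0 := by
  rw [vY_eq (sizeOf t) t le_rfl ht Y hY (sizeOf t) le_rfl p]
  have h1 : chiY t Y p = 0 := if_neg (fun hc => hp hc.1)
  have h2 : ∀ i ∈ Finset.range (sizeOf t), chiY t Y (p ++ [i]) = 0 :=
    fun i _ => if_neg (fun hc => not_unc_append hp i hc.1)
  rw [h1, Finset.sum_congr rfl h2]
  simp

theorem prefix_dropLast' {p q : List ℕ} (h : q <+: p) (hne : q ≠ p) : q <+: p.dropLast := by
  have hlen : q.length < p.length := by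
    rcases Nat.lt_or_ge q.length p.length with h' | h'
    · exact h'
    · exact absurd (List.IsPrefix.eq_of_length_le h h') hne
  have h2 : q = (p.take (p.length - 1)).take q.length := by
    rw [List.take_take, min_eq_left (by omega), ← List.prefix_iff_eq_take.1 h]
  rw [List.dropLast_eq_take, h2]
  exact List.take_prefix _ _

theorem dropLast_concat_getLastD {w : List ℕ} (h : w ≠ []) :
    w.dropLast ++ [w.getLastD 0] = w := by
  rcases List.eq_nil_or_concat w with rfl | ⟨u, a, rfl⟩
  · exact absurd rfl h
  · rw [List.concat_eq_append, List.dropLast_concat, List.getLastD_concat]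

theorem getLastD_mem {w : List ℕ} (h : w ≠ []) : w.getLastD 0 ∈ w := by
  rcases List.eq_nil_or_concat w with rfl | ⟨u, a, rfl⟩
  · exact absurd rfl h
  · rw [List.concat_eq_append, List.getLastD_concat]
    exact List.mem_append_right _ (List.mem_singleton_self _)

theorem Yv_vYr {t : CTree α} (ht : IsColoredTree t) {Y : Finset (List ℕ)}
    (hY : MinComplete t Y) {v : List ℕ} (hv : v ∈ uncS t) :
    pairR t (sv t v) (vYr t Y) = ((chiY t Y v : ℤ) : ℝ) := by
  rw [pairR_sv]
  set A := (uncS t).filter (fun u => v <+: u) with hA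
  have hvA : v ∈ A := Finset.mem_filter.2 ⟨hv, List.prefix_refl v⟩
  have key : ∀ u ∈ A, vYr t Y u = ((chiY t Y u : ℤ) : ℝ)
      - ∑ i ∈ Finset.range (sizeOf t), ((chiY t Y (u ++ [i]) : ℤ) : ℝ) := by
    intro u _
    unfold vYr
    rw [vY_eq (sizeOf t) t le_rfl ht Y hY (sizeOf t) le_rfl u]
    push_cast
    ring
  rw [Finset.sum_congr rfl key, Finset.sum_sub_distrib]
  have hswap : ∑ u ∈ A, ∑ i ∈ Finset.range (sizeOf t), ((chiY t Y (u ++ [i]) : ℤ) : ℝ)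
      = ∑ w ∈ A.erase v, ((chiY t Y w : ℤ) : ℝ) := by
    rw [← Finset.sum_product']
    rw [← Finset.sum_filter_add_sum_filter_not (A ×ˢ Finset.range (sizeOf t))
      (fun p => p.1 ++ [p.2] ∈ uncS t)]
    have hz : ∑ p ∈ (A ×ˢ Finset.range (sizeOf t)).filter
        (fun p => ¬ p.1 ++ [p.2] ∈ uncS t), ((chiY t Y (p.1 ++ [p.2]) : ℤ) : ℝ) = 0 := by
      refine Finset.sum_eq_zero ?_
      intro p hp
      have := (Finset.mem_filter.1 hp).2
      rw [show chiY t Y (p.1 ++ [p.2]) = 0 from if_neg (fun hc => this hc.1)]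
      simp
    rw [hz, add_zero]
    refine Finset.sum_nbij' (i := fun p => p.1 ++ [p.2])
      (j := fun w => (w.dropLast, w.getLastD 0)) ?_ ?_ ?_ ?_ ?_
    · intro p hp
      rw [Finset.mem_filter, Finset.mem_product] at hp
      obtain ⟨⟨hpA, _⟩, hpu⟩ := hp
      rw [Finset.mem_erase]
      obtain ⟨hpu', hpv⟩ := Finset.mem_filter.1 hpA
      constructor
      · intro hcon
        have h1 : v.length ≤ p.1.length := hpv.length_le
        have h2 := congrArg List.length hcon
        simp at h2
        omega
      · exact Finset.mem_filter.2 ⟨hpu, hpv.trans (List.prefix_append _ _)⟩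
    · intro w hw
      rw [Finset.mem_erase] at hw
      obtain ⟨hwv, hwA⟩ := hw
      obtain ⟨hwu, hvw⟩ := Finset.mem_filter.1 hwA
      have hwne : w ≠ [] := by
        rintro rfl
        exact hwv (List.prefix_nil.1 hvw).symm
      have hwvert : w ∈ vertS t := uncS_subset_vertS hwu
      rw [Finset.mem_filter, Finset.mem_product]
      have hconc := dropLast_concat_getLastD hwne
      refine ⟨⟨?_, ?_⟩, ?_⟩
      · exact Finset.mem_filter.2 ⟨unc_of_parent hwvert hwne,
          prefix_dropLast' hvw (Ne.symm hwv)⟩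
      · rw [Finset.mem_range]
        exact entries_lt_of_uncS hwu _ (getLastD_mem hwne)
      · dsimp only
        rw [hconc]
        exact hwu
    · intro p hp
      simp [List.dropLast_concat, List.getLastD_concat]
    · intro w hw
      rw [Finset.mem_erase] at hw
      obtain ⟨hwv, hwA⟩ := hw
      obtain ⟨hwu, hvw⟩ := Finset.mem_filter.1 hwA
      have hwne : w ≠ [] := by
        rintro rfl
        exact hwv (List.prefix_nil.1 hvw).symm
      exact dropLast_concat_getLastD hwne
    · intro p hp
      rfl
  rw [hswap, ← Finset.add_sum_erase A (fun u => ((chiY t Y u : ℤ) : ℝ)) hvA]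
  ring

theorem Yv_vYr_vert {t : CTree α} (ht : IsColoredTree t) {Y : Finset (List ℕ)}
    (hY : MinComplete t Y) {v : List ℕ} (hv : v ∈ vertS t) :
    pairR t (sv t v) (vYr t Y) = ((chiY t Y v : ℤ) : ℝ) := by
  rcases unc_or_col_of_vert hv with h | h
  · exact Yv_vYr ht hY h
  · rw [sv_colS_zero t h]
    rw [show chiY t Y v = 0 from if_neg (fun hc => not_unc_of_col h hc.1)]
    simp

theorem pairR_wt_vYr {t : CTree α} (ht : IsColoredTree t) {Y : Finset (List ℕ)}
    (hY : MinComplete t Y) {d : List ℕ} (hd : d ∈ edgeS t) :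
    pairR t (wt t d) (vYr t Y) = if d ∈ Y then 1 else 0 := by
  have hdne : d ≠ [] := (mem_edgeS.1 hd).1
  have hdv : d ∈ vertS t := mem_vertS.2 (mem_edgeS.1 hd).2
  have hpu : d.dropLast ∈ uncS t := unc_of_parent hdv hdne
  rw [pairR_wt, Yv_vYr ht hY hpu, Yv_vYr_vert ht hY hdv]
  have key : chiY t Y d.dropLast - chiY t Y d = if d ∈ Y then (1 : ℤ) else 0 := by
    by_cases hdY : d ∈ Y
    · have h1 : chiY t Y d.dropLast = 1 := by
        refine if_pos ⟨hpu, ?_⟩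
        intro d' hd' hp'
        have hne : d' ≠ d := by
          intro h
          subst h
          have h1 := hp'.length_le
          rw [List.length_dropLast] at h1
          have : d'.length ≠ 0 := fun h0 => hdne (List.length_eq_zero_iff.1 h0)
          omega
        have hpd : d' <+: d := hp'.trans (List.dropLast_prefix d)
        obtain ⟨co, hc, hdc⟩ := exists_colored_desc ht hdv
        obtain ⟨e, _, hun⟩ := hY.2 co hc
        have h3 := hun d' ⟨hd', hpd.trans hdc⟩
        have h4 := hun d ⟨hdY, hdc⟩
        exact hne (h3.trans h4.symm)
      have h2 : chiY t Y d = 0 := by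
        unfold chiY
        rw [if_neg]
        rintro ⟨_, h⟩
        exact h d hdY (List.prefix_refl d)
      rw [h1, h2]
      simp [hdY]
    · by_cases hpre : ∀ d' ∈ Y, ¬ d' <+: d.dropLast
      · have h1 : chiY t Y d.dropLast = 1 := if_pos ⟨hpu, hpre⟩
        have hdu : d ∈ uncS t := by
          rcases unc_or_col_of_vert hdv with h | h
          · exact h
          · exfalso
            obtain ⟨e, ⟨heY, hep⟩, _⟩ := hY.2 d h
            have hne : e ≠ d := fun h' => hdY (h' ▸ heY)
            exact hpre e heY (prefix_dropLast' hep hne)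
        have h2 : chiY t Y d = 1 := by
          refine if_pos ⟨hdu, ?_⟩
          intro d' hd' hp'
          have hne : d' ≠ d := fun h' => hdY (h' ▸ hd')
          exact hpre d' hd' (prefix_dropLast' hp' hne)
        rw [h1, h2]
        simp [hdY]
      · push_neg at hpre
        obtain ⟨d', hd'Y, hd'p⟩ := hpre
        have h1 : chiY t Y d.dropLast = 0 := by
          unfold chiY
          rw [if_neg]
          rintro ⟨_, h⟩
          exact h d' hd'Y hd'p
        have h2 : chiY t Y d = 0 := by
          unfold chiY
          rw [if_neg]
          rintro ⟨_, h⟩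
          exact h d' hd'Y (hd'p.trans (List.dropLast_prefix d))
        rw [h1, h2]
        simp [hdY]
  rw [← Int.cast_sub, key]
  split <;> simp

theorem chiY_nil {t : CTree α} (ht : IsColoredTree t) {Y : Finset (List ℕ)}
    (hY : MinComplete t Y) : chiY t Y ([] : List ℕ) = 1 := by
  refine if_pos ⟨root_unc ht, ?_⟩
  intro d hd hp
  exact nil_not_mem_Y hY ((List.prefix_nil.1 hp) ▸ hd)

theorem pairR_zero (t : CTree α) (μ : List ℕ → ℤ) : pairR t μ (0 : List ℕ → ℝ) = 0 := by
  simp [pairR]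

theorem vYr_ne_zero {t : CTree α} (ht : IsColoredTree t) {Y : Finset (List ℕ)}
    (hY : MinComplete t Y) : vYr t Y ≠ 0 := by
  intro h0
  have h1 := Yv_vYr ht hY (root_unc ht)
  rw [h0, pairR_zero, chiY_nil ht hY] at h1
  norm_num at h1

theorem vYr_mem_dualCone {t : CTree α} (ht : IsColoredTree t) {Y : Finset (List ℕ)}
    (hY : MinComplete t Y) : vYr t Y ∈ dualCone t := by
  constructor
  · intro p hp
    unfold vYr
    rw [vY_supp ht hY hp]
    simp
  · intro d hd
    rw [pairR_wt_vYr ht hY hd]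
    split <;> norm_num

end CTree
namespace CTree
variable {α : Type}

theorem Yv_const_on_D {t : CTree α} (ht : IsColoredTree t) {Y : Finset (List ℕ)}
    (hY : MinComplete t Y) {x : List ℕ → ℝ} (hx : x ∈ dualCone t)
    (hzero : ∀ d ∈ edgeS t, d ∉ Y → pairR t (wt t d) x = 0) :
    ∀ v ∈ uncS t, pairR t (sv t v) x = pairR t (sv t []) x * ((chiY t Y v : ℤ) : ℝ) := by
  intro v hv
  by_cases hD : ∀ d ∈ Y, ¬ d <+: v
  · have hchi : chiY t Y v = 1 := if_pos ⟨hv, hD⟩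
    rw [hchi]
    push_cast
    rw [mul_one]
    have hvert := uncS_subset_vertS hv
    have key : ∀ k, pairR t (sv t (v.take k)) x = pairR t (sv t []) x := by
      intro k
      induction k with
      | zero => rw [List.take_zero]
      | succ k ih =>
        by_cases hk : k < v.length
        · have he := take_mem_edgeS hvert hk
          have heY : v.take (k+1) ∉ Y := fun hc => hD _ hc (List.take_prefix _ v)
          have h0 := hzero _ he heY
          rw [pairR_wt, dropLast_take_succ hk] at h0
          linarith
        · push_neg at hk
          have heq : v.take (k+1) = v.take k := by
            rw [List.take_of_length_le hk, List.take_of_length_le (by omega)]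
          rw [heq]
          exact ih
    have hfin := key v.length
    rwa [List.take_length] at hfin
  · push_neg at hD
    obtain ⟨d, hdY, hdv⟩ := hD
    have hchi : chiY t Y v = 0 := by
      unfold chiY
      rw [if_neg]
      rintro ⟨_, h⟩
      exact h d hdY hdv
    rw [hchi]
    push_cast
    rw [mul_zero]
    obtain ⟨c, hc, hvc⟩ := exists_colored_desc ht (uncS_subset_vertS hv)
    have hvlen : v.length ≤ c.length := hvc.length_le
    have hdlen : d.length ≤ v.length := hdv.length_le
    have claim : ∀ j, j ≤ c.length - v.length →
        pairR t (sv t (c.take (c.length - j))) x = 0 := by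
      intro j
      induction j with
      | zero =>
        intro _
        rw [Nat.sub_zero, List.take_length]
        exact sv_colS_zero t hc x
      | succ j ih =>
        intro hj
        have hm1 : (c.length - (j+1)) + 1 = c.length - j := by omega
        have hmv : v.length ≤ c.length - (j+1) := by omega
        have hmlt : c.length - (j+1) < c.length := by omega
        have he2 := take_mem_edgeS (colS_subset_vertS hc) hmlt
        have heY2 : c.take ((c.length - (j+1))+1) ∉ Y := by
          intro hcY
          obtain ⟨e, _, hun⟩ := hY.2 c hc
          have h1 := hun _ ⟨hcY, List.take_prefix _ c⟩
          have h2 := hun d ⟨hdY, hdv.trans hvc⟩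
          have hlen : (c.take ((c.length - (j+1))+1)).length = (c.length - (j+1)) + 1 := by
            rw [List.length_take]
            omega
          have := congrArg List.length (h1.trans h2.symm)
          rw [hlen] at this
          omega
        have h0 := hzero _ he2 heY2
        rw [pairR_wt, dropLast_take_succ hmlt] at h0
        have hih := ih (by omega)
        rw [hm1] at h0
        linarith
    have hfin := claim (c.length - v.length) le_rfl
    have hvt : c.take (c.length - (c.length - v.length)) = v := by
      have h5 : c.length - (c.length - v.length) = v.length := by omega
      rw [h5, ← List.prefix_iff_eq_take.1 hvc]
    rwa [hvt] at hfin

theorem eq_smul_vYr {t : CTree α} (ht : IsColoredTree t) {Y : Finset (List ℕ)}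
    (hY : MinComplete t Y) {x : List ℕ → ℝ} (hx : x ∈ dualCone t)
    (hzero : ∀ d ∈ edgeS t, d ∉ Y → pairR t (wt t d) x = 0) :
    x = (pairR t (sv t []) x) • vYr t Y := by
  have hsupp : ∀ p, p ∉ uncS t → (x - (pairR t (sv t []) x) • vYr t Y) p = 0 := by
    intro p hp
    have h1 : vYr t Y p = 0 := by
      unfold vYr
      rw [vY_supp ht hY hp]
      simp
    simp [Pi.sub_apply, Pi.smul_apply, hx.1 p hp, h1]
  have hYv : ∀ v ∈ uncS t, pairR t (sv t v) (x - (pairR t (sv t []) x) • vYr t Y) = 0 := by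
    intro v hv
    rw [pairR_sub, pairR_smul, Yv_vYr ht hY hv, Yv_const_on_D ht hY hx hzero v hv]
    ring
  have hz := eq_zero_of_Yv_zero hsupp hYv
  funext v
  have h2 := hz v
  rw [Pi.sub_apply] at h2
  linarith [h2]

theorem zero_mem_dualCone (t : CTree α) : (0 : List ℕ → ℝ) ∈ dualCone t :=
  ⟨fun _ _ => rfl, fun d _ => by rw [pairR_zero]⟩

theorem ray_subset_dualCone {t : CTree α} (ht : IsColoredTree t) {Y : Finset (List ℕ)}
    (hY : MinComplete t Y) : ray (vYr t Y) ⊆ dualCone t := by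
  rintro x ⟨c, hc, rfl⟩
  exact dualCone_smul hc (vYr_mem_dualCone ht hY)

theorem isOneDimFace_vYr {t : CTree α} (ht : IsColoredTree t) {Y : Finset (List ℕ)}
    (hY : MinComplete t Y) : IsOneDimFace (dualCone t) (ray (vYr t Y)) := by
  refine ⟨ray_subset_dualCone ht hY, ⟨vYr t Y, vYr_ne_zero ht hY, rfl⟩, ?_⟩
  intro x hx y hy hxy
  obtain ⟨c, hc, hcs⟩ := hxy
  have key : ∀ d ∈ edgeS t, d ∉ Y → pairR t (wt t d) x = 0 ∧ pairR t (wt t d) y = 0 := by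
    intro d hd hdY
    have h1 : pairR t (wt t d) (x + y) = 0 := by
      rw [hcs, pairR_smul, pairR_wt_vYr ht hY hd, if_neg hdY, mul_zero]
    rw [pairR_add] at h1
    have h2 := hx.2 d hd
    have h3 := hy.2 d hd
    constructor <;> linarith
  constructor
  · exact ⟨pairR t (sv t []) x, Yv_nonneg ht hx (uncS_subset_vertS (root_unc ht)),
      eq_smul_vYr ht hY hx (fun d hd h => (key d hd h).1)⟩
  · exact ⟨pairR t (sv t []) y, Yv_nonneg ht hy (uncS_subset_vertS (root_unc ht)),
      eq_smul_vYr ht hY hy (fun d hd h => (key d hd h).2)⟩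

theorem dualCone_decomp {t : CTree α} (ht : IsColoredTree t) :
    ∀ (k : ℕ) (x : List ℕ → ℝ), x ∈ dualCone t →
    (((uncS t).image (fun v => pairR t (sv t v) x)) ∪ {0}).card ≤ k + 1 →
    ∃ c : Finset (List ℕ) → ℝ, (∀ Y, 0 ≤ c Y) ∧
      x = ∑ Y ∈ MCfin t, c Y • vYr t Y := by
  intro k
  induction k with
  | zero =>
    intro x hx hcard
    have hall : ∀ v ∈ uncS t, pairR t (sv t v) x = 0 := by
      intro v hv
      have h1 : pairR t (sv t v) x ∈ ((uncS t).image (fun v => pairR t (sv t v) x)) ∪ {0} :=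
        Finset.mem_union_left _ (Finset.mem_image_of_mem _ hv)
      have h2 : (0:ℝ) ∈ ((uncS t).image (fun v => pairR t (sv t v) x)) ∪ {0} :=
        Finset.mem_union_right _ (Finset.mem_singleton_self 0)
      exact Finset.card_le_one.1 hcard _ h1 _ h2
    have hz := eq_zero_of_Yv_zero hx.1 hall
    refine ⟨0, fun Y => le_rfl, ?_⟩
    funext p
    simp [hz p]
  | succ k ih =>
    intro x hx hcard
    rcases eq_or_lt_of_le (Yv_nonneg ht hx (uncS_subset_vertS (root_unc ht))) with hr0 | hr0
    · have hall : ∀ v ∈ uncS t, pairR t (sv t v) x = 0 := by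
        intro v hv
        have hub : pairR t (sv t v) x ≤ pairR t (sv t []) x := by
          have := Yv_mono_take hx (uncS_subset_vertS hv) 0
          rwa [List.take_zero] at this
        have hlb := Yv_nonneg ht hx (uncS_subset_vertS hv)
        linarith
      have hz := eq_zero_of_Yv_zero hx.1 hall
      refine ⟨0, fun Y => le_rfl, ?_⟩
      funext p
      simp [hz p]
    · set r := pairR t (sv t []) x with hr
      set D := (uncS t).filter (fun v => pairR t (sv t v) x = r) with hD
      have hDpre : ∀ v ∈ D, ∀ q, q <+: v → q ∈ D := by
        intro v hv q hq
        obtain ⟨hvu, hvr⟩ := Finset.mem_filter.1 hv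
        have hqu : q ∈ uncS t := by
          by_cases hqv : q = v
          · exact hqv ▸ hvu
          · exact unc_of_proper_prefix hq hqv (uncS_subset_vertS hvu)
        refine Finset.mem_filter.2 ⟨hqu, ?_⟩
        have h1 : pairR t (sv t v) x ≤ pairR t (sv t q) x :=
          Yv_mono_prefix hx (uncS_subset_vertS hvu) hq
        have h2 : pairR t (sv t q) x ≤ pairR t (sv t []) x := by
          have := Yv_mono_take hx (uncS_subset_vertS hqu) 0
          rwa [List.take_zero] at this
        rw [hvr] at h1
        rw [← hr] at h2
        linarith
      have hrootD : ([] : List ℕ) ∈ D := Finset.mem_filter.2 ⟨root_unc ht, rfl⟩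
      set YD := (edgeS t).filter (fun d => d.dropLast ∈ D ∧ d ∉ D) with hYD
      have hISL : ∀ w ∈ vertS t, w ∉ D →
          ∃ e, (e ∈ YD ∧ e <+: w) ∧ ∀ d, d ∈ YD ∧ d <+: w → d = e := by
        intro w hw hwD
        set P := fun m => w.take m ∈ D with hP
        set m0 := Nat.findGreatest P w.length with hm0
        have hP0 : P 0 := by
          simp only [hP]
          simpa using hrootD
        have hm0spec : P m0 := Nat.findGreatest_spec (Nat.zero_le _) hP0
        have hm0le : m0 ≤ w.length := Nat.findGreatest_le _
        have hm0lt : m0 < w.length := by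
          rcases eq_or_lt_of_le hm0le with h | h
          · exfalso
            have hsp : w.take m0 ∈ D := hm0spec
            rw [h, List.take_length] at hsp
            exact hwD hsp
          · exact h
        have hgreat : ∀ m, m0 < m → m ≤ w.length → ¬ P m := fun m h1 h2 =>
          Nat.findGreatest_is_greatest h1 h2
        set e := w.take (m0+1) with he
        have heE : e ∈ edgeS t := take_mem_edgeS hw hm0lt
        have heD : e ∉ D := hgreat (m0+1) (by omega) (by omega)
        have hepar : e.dropLast ∈ D := by
          rw [he, dropLast_take_succ hm0lt]
          exact hm0spec
        refine ⟨e, ⟨Finset.mem_filter.2 ⟨heE, hepar, heD⟩, List.take_prefix _ w⟩, ?_⟩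
        rintro d ⟨hdYD, hdw⟩
        obtain ⟨hdE, hdpar, hdD⟩ := Finset.mem_filter.1 hdYD
        have hdtake : d = w.take d.length := List.prefix_iff_eq_take.1 hdw
        have hdne : d ≠ [] := (mem_edgeS.1 hdE).1
        have hdlen0 : d.length ≠ 0 := fun h => hdne (List.length_eq_zero_iff.1 h)
        have hdlenle : d.length ≤ w.length := hdw.length_le
        have hP1 : P (d.length - 1) := by
          show w.take (d.length - 1) ∈ D
          have hdl : d.dropLast = w.take (d.length - 1) := by
            conv_lhs => rw [hdtake]
            rw [show d.length = (d.length - 1) + 1 by omega]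
            exact dropLast_take_succ (by omega)
          rw [← hdl]
          exact hdpar
        have hle1 : d.length - 1 ≤ m0 := by
          by_contra hcon
          push_neg at hcon
          exact hgreat _ hcon (by omega) hP1
        have hgt : m0 < d.length := by
          by_contra hcon
          push_neg at hcon
          have h5 : (w.take m0).take d.length = w.take d.length := by
            rw [List.take_take, min_eq_left hcon]
          have hsub : d <+: w.take m0 := by
            rw [hdtake, ← h5]
            exact List.take_prefix _ _
          exact hdD (hDpre _ hm0spec d hsub)
        have hdl2 : d.length = m0 + 1 := by omega
        rw [hdtake, hdl2]
      have hYDmc : MinComplete t YD := by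
        constructor
        · exact Finset.filter_subset _ _
        · intro c hc
          have hcD : c ∉ D := fun h => not_unc_of_col hc (Finset.mem_filter.1 h).1
          obtain ⟨e, he, hun⟩ := hISL c (colS_subset_vertS hc) hcD
          exact ⟨e, he, fun d hd => hun d hd⟩
      have hchiD : ∀ v ∈ uncS t, ((chiY t YD v : ℤ) : ℝ) = if v ∈ D then 1 else 0 := by
        intro v hv
        by_cases hvD : v ∈ D
        · have h1 : chiY t YD v = 1 := by
            refine if_pos ⟨hv, ?_⟩
            intro d hd hdv
            obtain ⟨_, _, hdD⟩ := Finset.mem_filter.1 hd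
            exact hdD (hDpre v hvD d hdv)
          rw [h1, if_pos hvD]
          norm_num
        · obtain ⟨e, ⟨heYD, hev⟩, _⟩ := hISL v (uncS_subset_vertS hv) hvD
          have h1 : chiY t YD v = 0 := by
            unfold chiY
            rw [if_neg]
            rintro ⟨_, h⟩
            exact h e heYD hev
          rw [h1, if_neg hvD]
          norm_num
      have hYDne : YD.Nonempty := by
        obtain ⟨c, hc, _⟩ := exists_colored_desc ht (uncS_subset_vertS (root_unc ht))
        have hcD : c ∉ D := fun h => not_unc_of_col hc (Finset.mem_filter.1 h).1
        obtain ⟨e, ⟨heYD, _⟩, _⟩ := hISL c (colS_subset_vertS hc) hcD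
        exact ⟨e, heYD⟩
      have himgne : (YD.image (fun d => pairR t (wt t d) x)).Nonempty := hYDne.image _
      set c0 := (YD.image (fun d => pairR t (wt t d) x)).min' himgne with hc0
      obtain ⟨dstar, hdstar, hdsval⟩ :=
        Finset.mem_image.1 ((YD.image (fun d => pairR t (wt t d) x)).min'_mem himgne)
      obtain ⟨hdsE, hdspar, hdsD⟩ := Finset.mem_filter.1 hdstar
      have hdsv : dstar ∈ vertS t := mem_vertS.2 (mem_edgeS.1 hdsE).2
      have hYvds_lt : pairR t (sv t dstar) x < r := by
        rcases unc_or_col_of_vert hdsv with h | h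
        · have h1 : pairR t (sv t dstar) x ≤ r := by
            have := Yv_mono_take hx (uncS_subset_vertS h) 0
            rw [List.take_zero] at this
            rw [hr]
            exact this
          have h2 : pairR t (sv t dstar) x ≠ r := fun hh => hdsD (Finset.mem_filter.2 ⟨h, hh⟩)
          exact lt_of_le_of_ne h1 h2
        · rw [sv_colS_zero t h]
          exact hr0
      have hc0val : c0 = r - pairR t (sv t dstar) x := by
        rw [hc0, ← hdsval, pairR_wt, (Finset.mem_filter.1 hdspar).2]
      have hc0pos : 0 < c0 := by
        rw [hc0val]
        linarith
      have hx'mem : x - c0 • vYr t YD ∈ dualCone t := by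
        constructor
        · intro p hp
          have h1 : vYr t YD p = 0 := by
            unfold vYr
            rw [vY_supp ht hYDmc hp]
            simp
          simp [Pi.sub_apply, Pi.smul_apply, hx.1 p hp, h1]
        · intro d hd
          rw [pairR_sub, pairR_smul, pairR_wt_vYr ht hYDmc hd]
          by_cases hdY : d ∈ YD
          · rw [if_pos hdY, mul_one]
            have hmin : c0 ≤ pairR t (wt t d) x :=
              Finset.min'_le _ _ (Finset.mem_image_of_mem _ hdY)
            linarith
          · rw [if_neg hdY, mul_zero, sub_zero]
            exact hx.2 d hd
      have hYvx' : ∀ v ∈ uncS t, pairR t (sv t v) (x - c0 • vYr t YD)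
          = if v ∈ D then r - c0 else pairR t (sv t v) x := by
        intro v hv
        rw [pairR_sub, pairR_smul, Yv_vYr ht hYDmc hv, hchiD v hv]
        by_cases hvD : v ∈ D
        · rw [if_pos hvD, if_pos hvD, mul_one, (Finset.mem_filter.1 hvD).2]
        · rw [if_neg hvD, if_neg hvD, mul_zero, sub_zero]
      have hsub : ((uncS t).image (fun v => pairR t (sv t v) (x - c0 • vYr t YD))) ∪ {0}
          ⊆ (((uncS t).image (fun v => pairR t (sv t v) x)) ∪ {0}).erase r := by
        intro a ha
        rw [Finset.mem_erase]
        rcases Finset.mem_union.1 ha with h | h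
        · obtain ⟨v, hv, rfl⟩ := Finset.mem_image.1 h
          rw [hYvx' v hv]
          by_cases hvD : v ∈ D
          · rw [if_pos hvD]
            constructor
            · intro hcon
              have : c0 = 0 := by linarith [hcon]
              linarith
            · have hrc : r - c0 = pairR t (sv t dstar) x := by
                rw [hc0val]
                ring
              rw [hrc]
              rcases unc_or_col_of_vert hdsv with h' | h'
              · exact Finset.mem_union_left _ (Finset.mem_image_of_mem _ h')
              · rw [sv_colS_zero t h']
                exact Finset.mem_union_right _ (Finset.mem_singleton_self 0)
          · rw [if_neg hvD]
            exact ⟨fun hcon => hvD (Finset.mem_filter.2 ⟨hv, hcon⟩),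
              Finset.mem_union_left _ (Finset.mem_image_of_mem _ hv)⟩
        · rw [Finset.mem_singleton.1 h]
          exact ⟨by linarith, Finset.mem_union_right _ (Finset.mem_singleton_self 0)⟩
      have hrV : r ∈ ((uncS t).image (fun v => pairR t (sv t v) x)) ∪ {0} :=
        Finset.mem_union_left _ (Finset.mem_image_of_mem _ (root_unc ht))
      have hcard' : (((uncS t).image (fun v => pairR t (sv t v) (x - c0 • vYr t YD))) ∪ {0}).card
          ≤ k + 1 := by
        have h1 := Finset.card_le_card hsub
        have h2 := Finset.card_erase_of_mem hrV
        omega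
      obtain ⟨cIH, hcIHnn, hcIHeq⟩ := ih (x - c0 • vYr t YD) hx'mem hcard'
      have hYDmem : YD ∈ MCfin t :=
        Finset.mem_filter.2 ⟨Finset.mem_powerset.2 (Finset.filter_subset _ _), hYDmc⟩
      refine ⟨fun Y => cIH Y + if Y = YD then c0 else 0, ?_, ?_⟩
      · intro Y
        refine add_nonneg (hcIHnn Y) ?_
        split_ifs
        · linarith
        · exact le_refl 0
      · have hsplit : ∑ Y ∈ MCfin t, (cIH Y + if Y = YD then c0 else 0) • vYr t Y
            = (∑ Y ∈ MCfin t, cIH Y • vYr t Y)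
              + ∑ Y ∈ MCfin t, (if Y = YD then c0 else 0) • vYr t Y := by
          rw [← Finset.sum_add_distrib]
          exact Finset.sum_congr rfl fun Y _ => add_smul _ _ _
        rw [hsplit, ← hcIHeq]
        have hsingle : ∑ Y ∈ MCfin t, (if Y = YD then c0 else 0) • vYr t Y
            = c0 • vYr t YD := by
          rw [Finset.sum_eq_single_of_mem YD hYDmem]
          · rw [if_pos rfl]
          · intro b _ hb
            rw [if_neg hb, zero_smul]
        rw [hsingle, sub_add_cancel]

end CTree
namespace CTree
variable {α : Type}

theorem mem_ray_self (v : List ℕ → ℝ) : v ∈ ray v := ⟨1, zero_le_one, (one_smul _ _).symm⟩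

theorem ray_smul {v : List ℕ → ℝ} {a : ℝ} (ha : 0 < a) : ray (a • v) = ray v := by
  ext x
  constructor
  · rintro ⟨c, hc, rfl⟩
    exact ⟨c * a, mul_nonneg hc ha.le, smul_smul _ _ _⟩
  · rintro ⟨c, hc, rfl⟩
    refine ⟨c / a, div_nonneg hc ha.le, ?_⟩
    rw [smul_smul, div_mul_cancel₀ _ (ne_of_gt ha)]

theorem sum_mem_dualCone {t : CTree α} :
    ∀ (s : Finset (Finset (List ℕ))) (g : Finset (List ℕ) → (List ℕ → ℝ)),
    (∀ i ∈ s, g i ∈ dualCone t) → ∑ i ∈ s, g i ∈ dualCone t := by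
  intro s
  induction s using Finset.induction_on with
  | empty =>
    intro g _
    rw [Finset.sum_empty]
    exact zero_mem_dualCone t
  | @insert a s hnm ih =>
    intro g hg
    rw [Finset.sum_insert hnm]
    exact dualCone_add (hg a (Finset.mem_insert_self a s))
      (ih g (fun i hi => hg i (Finset.mem_insert_of_mem hi)))

theorem face_sum_mem {t : CTree α} {F : Set (List ℕ → ℝ)}
    (hF : IsOneDimFace (dualCone t) F) :
    ∀ (s : Finset (Finset (List ℕ))) (g : Finset (List ℕ) → (List ℕ → ℝ)),
    (∀ i ∈ s, g i ∈ dualCone t) → (∑ i ∈ s, g i) ∈ F → ∀ i ∈ s, g i ∈ F := by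
  intro s
  induction s using Finset.induction_on with
  | empty => intro g _ _ i hi; exact absurd hi (Finset.notMem_empty i)
  | @insert a s hnm ih =>
    intro g hg hsum i hi
    rw [Finset.sum_insert hnm] at hsum
    have h1 : g a ∈ dualCone t := hg a (Finset.mem_insert_self a s)
    have h2 : ∑ j ∈ s, g j ∈ dualCone t :=
      sum_mem_dualCone s g (fun j hj => hg j (Finset.mem_insert_of_mem hj))
    obtain ⟨hga, hgs⟩ := hF.2.2 _ h1 _ h2 hsum
    rcases Finset.mem_insert.1 hi with rfl | hi'
    · exact hga
    · exact ih g (fun j hj => hg j (Finset.mem_insert_of_mem hj)) hgs i hi'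

theorem ray_inj {t : CTree α} (ht : IsColoredTree t) {Y₁ Y₂ : Finset (List ℕ)}
    (h1 : MinComplete t Y₁) (h2 : MinComplete t Y₂)
    (heq : ray (vYr t Y₁) = ray (vYr t Y₂)) : Y₁ = Y₂ := by
  have hmem : vYr t Y₁ ∈ ray (vYr t Y₂) := heq ▸ mem_ray_self _
  obtain ⟨c, hc, hcs⟩ := hmem
  obtain ⟨cl, hcl, _⟩ := exists_colored_desc ht (uncS_subset_vertS (root_unc ht))
  obtain ⟨d1, ⟨hd1Y, _⟩, _⟩ := h1.2 cl hcl
  have hkey : ∀ d ∈ edgeS t,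
      (if d ∈ Y₁ then (1:ℝ) else 0) = c * (if d ∈ Y₂ then 1 else 0) := by
    intro d hd
    rw [← pairR_wt_vYr ht h1 hd, ← pairR_wt_vYr ht h2 hd, hcs, pairR_smul]
  have hc1 : c = 1 := by
    have h3 := hkey d1 (h1.1 hd1Y)
    rw [if_pos hd1Y] at h3
    by_cases hd2 : d1 ∈ Y₂
    · rw [if_pos hd2, mul_one] at h3
      exact h3.symm
    · rw [if_neg hd2, mul_zero] at h3
      norm_num at h3
  ext d
  constructor
  · intro hdY1
    have h3 := hkey d (h1.1 hdY1)
    rw [if_pos hdY1, hc1, one_mul] at h3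
    by_contra hd2
    rw [if_neg hd2] at h3
    norm_num at h3
  · intro hdY2
    have h3 := hkey d (h2.1 hdY2)
    rw [if_pos hdY2, hc1, one_mul] at h3
    by_contra hd1'
    rw [if_neg hd1'] at h3
    norm_num at h3

theorem ray_surj {t : CTree α} (ht : IsColoredTree t) {F : Set (List ℕ → ℝ)}
    (hF : IsOneDimFace (dualCone t) F) :
    ∃ Y, MinComplete t Y ∧ ray (vYr t Y) = F := by
  obtain ⟨hFC, ⟨v, hvne, hFray⟩, hext⟩ := hF
  have hvF : v ∈ F := hFray ▸ mem_ray_self v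
  have hvC : v ∈ dualCone t := hFC hvF
  obtain ⟨c, hcnn, hceq⟩ := dualCone_decomp ht
    (((uncS t).image (fun u => pairR t (sv t u) v)) ∪ {0}).card v hvC (by omega)
  have hterm : ∀ Y ∈ MCfin t, c Y • vYr t Y ∈ F := by
    refine face_sum_mem ⟨hFC, ⟨v, hvne, hFray⟩, hext⟩ (MCfin t)
      (fun Y => c Y • vYr t Y) ?_ ?_
    · intro Y hYm
      exact dualCone_smul (hcnn Y) (vYr_mem_dualCone ht (Finset.mem_filter.1 hYm).2)
    · rw [← hceq]
      exact hvF
  have hex : ∃ Y ∈ MCfin t, c Y ≠ 0 := by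
    by_contra hcon
    push_neg at hcon
    apply hvne
    rw [hceq]
    exact Finset.sum_eq_zero (fun Y hY => by rw [hcon Y hY, zero_smul])
  obtain ⟨Y0, hY0m, hY0ne⟩ := hex
  have hY0mc : MinComplete t Y0 := (Finset.mem_filter.1 hY0m).2
  have hY0pos : 0 < c Y0 := lt_of_le_of_ne (hcnn Y0) (Ne.symm hY0ne)
  have hmemF : c Y0 • vYr t Y0 ∈ F := hterm Y0 hY0m
  rw [hFray] at hmemF
  obtain ⟨b, hb, hbs⟩ := hmemF
  have hbne : b ≠ 0 := by
    rintro rfl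
    rw [zero_smul] at hbs
    exact (smul_ne_zero (ne_of_gt hY0pos) (vYr_ne_zero ht hY0mc)) hbs
  have hbpos : 0 < b := lt_of_le_of_ne hb (Ne.symm hbne)
  refine ⟨Y0, hY0mc, ?_⟩
  rw [hFray]
  calc ray (vYr t Y0) = ray (c Y0 • vYr t Y0) := (ray_smul hY0pos).symm
    _ = ray (b • v) := by rw [hbs]
    _ = ray v := ray_smul hbpos

end CTree


/-- For every minimally complete `Y ⊆ E(Γ)` the vector `v_Y` lies in
`C(Γ)` and spans a one-dimensional face of `C(Γ)`; moreover `Y ↦ ℝ_{≥0}·v_Y` is a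
bijection from the minimally complete subsets onto the one-dimensional faces of
`C(Γ)`. -/
theorem vY_spans_oneDimFace_and_bijection {α : Type} (t : CTree α)
    (ht : t.IsColoredTree) :
    (∀ Y : Finset (List ℕ), t.MinComplete Y →
      (fun p => ((CTree.vY t Y p : ℤ) : ℝ)) ∈ CTree.dualCone t ∧
      CTree.IsOneDimFace (CTree.dualCone t)
        (CTree.ray (fun p => ((CTree.vY t Y p : ℤ) : ℝ)))) ∧
    Set.BijOn (fun Y : Finset (List ℕ) => CTree.ray (fun p => ((CTree.vY t Y p : ℤ) : ℝ)))
      {Y | t.MinComplete Y} {F | CTree.IsOneDimFace (CTree.dualCone t) F} := by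
  constructor
  · intro Y hY
    exact ⟨CTree.vYr_mem_dualCone ht hY, CTree.isOneDimFace_vYr ht hY⟩
  · refine ⟨?_, ?_, ?_⟩
    · intro Y hY
      exact CTree.isOneDimFace_vYr ht hY
    · intro Y1 h1 Y2 h2 heq
      exact CTree.ray_inj ht h1 h2 heq
    · intro F hF
      obtain ⟨Y, hYmc, hray⟩ := CTree.ray_surj ht hF
      exact ⟨Y, hYmc, hray⟩
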